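/- Every automorphism of the Johnson graph J(I, 2), for a finite index set I with |I| ≠ 4 and |I| ≥ 3, is induced by a permutation of I; that is, for every graph automorphism τ of J(I,2) there is a permutation π of I with τ({i,j}) = {π(i), π(j)} for all 2-element subsets {i,j}. -/

import Mathlib

/-- The Johnson graph `J(I,2)`: vertices are the `2`-element subsets of `I`, two
distinct subsets being adjacent iff they intersect. -/
def johnsonGraph (ι : Type*) [DecidableEq ι] :
    SimpleGraph {s : Finset ι // s.card = 2} where
  Adj s t := s ≠ t ∧ (s.val ∩ t.val).Nonempty
  symm := by
    constructor
    rintro s t ⟨h1, h2⟩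
    exact ⟨h1.symm, by rwa [Finset.inter_comm]⟩
  loopless := by
    constructor
    rintro s ⟨h, -⟩
    exact h rfl

section JGAux

set_option linter.unusedSectionVars false

variable {ι : Type*} [DecidableEq ι]

lemma jg_eq_pair {p : Finset ι} {x y : ι} (hp : p.card = 2)
    (hx : x ∈ p) (hy : y ∈ p) (hxy : x ≠ y) : p = {x, y} := by
  refine (Finset.eq_of_subset_of_card_le ?_ ?_).symm
  · exact Finset.insert_subset hx (Finset.singleton_subset_iff.2 hy)
  · rw [hp, Finset.card_pair hxy]

lemma jg_inter_unique {p q : Finset ι} (hp : p.card = 2) (hq : q.card = 2)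
    (hpq : p ≠ q) {x y : ι} (hxp : x ∈ p) (hxq : x ∈ q) (hyp : y ∈ p) (hyq : y ∈ q) :
    x = y := by
  by_contra hxy
  exact hpq ((jg_eq_pair hp hxp hyp hxy).trans (jg_eq_pair hq hxq hyq hxy).symm)

/-- Four pairwise distinct, pairwise intersecting 2-sets have a common point. -/
lemma jg_four {p q r w : Finset ι} (hp : p.card = 2) (hq : q.card = 2)
    (hr : r.card = 2) (hw : w.card = 2)
    (hpq : p ≠ q) (hpr : p ≠ r) (hpw : p ≠ w) (hqr : q ≠ r) (hqw : q ≠ w) (hrw : r ≠ w)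
    (ipq : (p ∩ q).Nonempty) (ipr : (p ∩ r).Nonempty) (ipw : (p ∩ w).Nonempty)
    (iqr : (q ∩ r).Nonempty) (iqw : (q ∩ w).Nonempty) (irw : (r ∩ w).Nonempty) :
    ∃ x, x ∈ p ∧ x ∈ q ∧ x ∈ r ∧ x ∈ w := by
  obtain ⟨x, hx⟩ := ipq
  rw [Finset.mem_inter] at hx
  obtain ⟨hxp, hxq⟩ := hx
  -- helper: if x ∉ s for s intersecting p, q, r/w appropriately
  have key : ∀ s : Finset ι, s.card = 2 → p ≠ s → q ≠ s →
      (p ∩ s).Nonempty → (q ∩ s).Nonempty → x ∉ s → ∃ y z, y ≠ x ∧ z ≠ x ∧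
      y ≠ z ∧ p = {x, y} ∧ q = {x, z} ∧ s = {y, z} := by
    intro s hs hps hqs ips iqs hxs
    obtain ⟨y, hy⟩ := ips; rw [Finset.mem_inter] at hy
    obtain ⟨z, hz⟩ := iqs; rw [Finset.mem_inter] at hz
    have hyx : y ≠ x := fun h => hxs (h ▸ hy.2)
    have hzx : z ≠ x := fun h => hxs (h ▸ hz.2)
    have hpe : p = {x, y} := jg_eq_pair hp hxp hy.1 (Ne.symm hyx)
    have hqe : q = {x, z} := jg_eq_pair hq hxq hz.1 (Ne.symm hzx)
    have hyz : y ≠ z := by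
      rintro rfl; exact hpq (hpe.trans hqe.symm)
    exact ⟨y, z, hyx, hzx, hyz, hpe, hqe, jg_eq_pair hs hy.2 hz.2 hyz⟩
  have hxr : x ∈ r := by
    by_contra hxr
    obtain ⟨y, z, hyx, hzx, hyz, hpe, hqe, hre⟩ := key r hr hpr hqr ipr iqr hxr
    by_cases hxw : x ∈ w
    · -- w = {x, u}, u ∈ r = {y,z}, so w = p or q
      obtain ⟨u, hu⟩ := irw; rw [Finset.mem_inter] at hu
      have hux : u ≠ x := by rintro rfl; exact hxr hu.1
      have hwe : w = {x, u} := jg_eq_pair hw hxw hu.2 (Ne.symm hux)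
      rw [hre, Finset.mem_insert, Finset.mem_singleton] at hu
      rcases hu.1 with h | h
      · exact hpw (hpe.trans (by rw [hwe, h]))
      · exact hqw (hqe.trans (by rw [hwe, h]))
    · obtain ⟨y', z', _, _, _, hpe', hqe', hwe⟩ := key w hw hpw hqw ipw iqw hxw
      have hy'y : y' = y := by
        have := hpe.symm.trans hpe'
        have hyp' : y ∈ ({x, y'} : Finset ι) := this ▸ (by simp : y ∈ ({x,y} : Finset ι))
        simp at hyp'
        rcases hyp' with h | h
        · exact absurd h hyx
        · exact h.symm
      have hz'z : z' = z := by
        have := hqe.symm.trans hqe'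
        have hzp' : z ∈ ({x, z'} : Finset ι) := this ▸ (by simp : z ∈ ({x,z} : Finset ι))
        simp at hzp'
        rcases hzp' with h | h
        · exact absurd h hzx
        · exact h.symm
      rw [hy'y, hz'z] at hwe
      exact hrw (hre.trans hwe.symm)
  have hxw : x ∈ w := by
    by_contra hxw
    obtain ⟨y, z, hyx, hzx, hyz, hpe, hqe, hwe⟩ := key w hw hpw hqw ipw iqw hxw
    obtain ⟨u, hu⟩ := irw; rw [Finset.mem_inter] at hu
    have hux : u ≠ x := by rintro rfl; exact hxw hu.2
    have hre : r = {x, u} := jg_eq_pair hr hxr hu.1 (Ne.symm hux)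
    rw [hwe, Finset.mem_insert, Finset.mem_singleton] at hu
    rcases hu.2 with h | h
    · exact hpr (hpe.trans (by rw [hre, h]))
    · exact hqr (hqe.trans (by rw [hre, h]))
  exact ⟨x, hxp, hxq, hxr, hxw⟩


def jgPair (i a : ι) (h : a ≠ i) : {s : Finset ι // s.card = 2} :=
  ⟨{i, a}, Finset.card_pair (Ne.symm h)⟩

lemma jgPair_fst (i a : ι) (h : a ≠ i) : i ∈ (jgPair i a h).val := by simp [jgPair]
lemma jgPair_snd (i a : ι) (h : a ≠ i) : a ∈ (jgPair i a h).val := by simp [jgPair]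

lemma jgPair_inj {i a b : ι} {ha : a ≠ i} {hb : b ≠ i}
    (h : jgPair i a ha = jgPair i b hb) : a = b := by
  have : a ∈ ({i, b} : Finset ι) := by
    have := congrArg Subtype.val h
    simp only [jgPair] at this
    rw [← this]; simp
  simp at this
  tauto

lemma jgPair_adj {i a b : ι} (ha : a ≠ i) (hb : b ≠ i) (hab : a ≠ b) :
    (johnsonGraph ι).Adj (jgPair i a ha) (jgPair i b hb) :=
  ⟨fun h => hab (jgPair_inj h), ⟨i, by simp [jgPair]⟩⟩

lemma jg_vertex_eq {s : {s : Finset ι // s.card = 2}} {i : ι} (hi : i ∈ s.val) :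
    ∃ a, ∃ h : a ≠ i, s = jgPair i a h := by
  have hc : (s.val.erase i).card = 1 := by
    rw [Finset.card_erase_of_mem hi, s.prop]
  obtain ⟨a, ha⟩ := Finset.card_eq_one.mp hc
  have hai : a ≠ i := by
    have : a ∈ s.val.erase i := ha ▸ Finset.mem_singleton_self a
    exact (Finset.mem_erase.mp this).1
  refine ⟨a, hai, Subtype.ext ?_⟩
  have := Finset.insert_erase hi
  rw [ha] at this
  simp only [jgPair]
  rw [← this]

variable [Fintype ι]

/-- number of vertices containing `i` -/
lemma jg_card_star (i : ι) :
    (Finset.univ.filter (fun s : {s : Finset ι // s.card = 2} => i ∈ s.val)).card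
      = Fintype.card ι - 1 := by
  have h1 : (Finset.univ.erase i).card = Fintype.card ι - 1 := by
    rw [Finset.card_erase_of_mem (Finset.mem_univ i), Finset.card_univ]
  rw [← h1]
  symm
  apply Finset.card_bij (i := fun a ha => jgPair i a (Finset.mem_erase.mp ha).1)
  · intro a ha
    simp only [Finset.mem_filter, Finset.mem_univ, true_and]
    exact jgPair_fst _ _ _
  · intro a ha b hb h
    exact jgPair_inj h
  · intro s hs
    simp only [Finset.mem_filter, Finset.mem_univ, true_and] at hs
    obtain ⟨a, hai, rfl⟩ := jg_vertex_eq hs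
    exact ⟨a, Finset.mem_erase.mpr ⟨hai, Finset.mem_univ a⟩, rfl⟩


/-- `x` is a "star point" of `i` under `τ`: every vertex containing `i` is mapped by `τ`
to a vertex containing `x`. -/
def jgStarPt (τ : johnsonGraph ι ≃g johnsonGraph ι) (i x : ι) : Prop :=
  ∀ s : {s : Finset ι // s.card = 2}, i ∈ s.val → x ∈ (τ s).val

lemma jg_image_val_ne (τ : johnsonGraph ι ≃g johnsonGraph ι)
    {s t : {s : Finset ι // s.card = 2}} (h : s ≠ t) : (τ s).val ≠ (τ t).val :=
  fun he => h (τ.toEquiv.injective (Subtype.ext he))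

lemma jg_image_inter (τ : johnsonGraph ι ≃g johnsonGraph ι)
    {s t : {s : Finset ι // s.card = 2}} (h : s ≠ t) (h2 : (s.val ∩ t.val).Nonempty) :
    ((τ s).val ∩ (τ t).val).Nonempty :=
  (τ.map_adj_iff.mpr ⟨h, h2⟩).2


lemma jg_starPt_unique (h3 : 3 ≤ Fintype.card ι) (τ : johnsonGraph ι ≃g johnsonGraph ι)
    {i x y : ι} (hx : jgStarPt τ i x) (hy : jgStarPt τ i y) : x = y := by
  have hcard : 1 < (Finset.univ.erase i).card := by
    rw [Finset.card_erase_of_mem (Finset.mem_univ i), Finset.card_univ]; omega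
  obtain ⟨a, ha, b, hb, hab⟩ := Finset.one_lt_card.mp hcard
  have hai := (Finset.mem_erase.mp ha).1
  have hbi := (Finset.mem_erase.mp hb).1
  have hne : jgPair i a hai ≠ jgPair i b hbi := fun h => hab (jgPair_inj h)
  exact jg_inter_unique (τ _).prop (τ _).prop (jg_image_val_ne τ hne)
    (hx _ (jgPair_fst i a hai)) (hx _ (jgPair_fst i b hbi))
    (hy _ (jgPair_fst i a hai)) (hy _ (jgPair_fst i b hbi))

lemma jg_starPt_inv (τ : johnsonGraph ι ≃g johnsonGraph ι) {i x : ι}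
    (h : jgStarPt τ i x) : jgStarPt τ.symm x i := by
  classical
  set Si := Finset.univ.filter (fun s : {s : Finset ι // s.card = 2} => i ∈ s.val) with hSi
  set Sx := Finset.univ.filter (fun s : {s : Finset ι // s.card = 2} => x ∈ s.val) with hSx
  have hsub : Si.image (fun s => τ s) ⊆ Sx := by
    intro t ht
    obtain ⟨s, hs, rfl⟩ := Finset.mem_image.mp ht
    simp only [hSi, Finset.mem_filter, Finset.mem_univ, true_and] at hs
    simp only [hSx, Finset.mem_filter, Finset.mem_univ, true_and]
    exact h s hs
  have hinj : Function.Injective (fun s : {s : Finset ι // s.card = 2} => τ s) :=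
    fun a b h => τ.toEquiv.injective h
  have hcard : Sx.card ≤ (Si.image (fun s => τ s)).card := by
    rw [Finset.card_image_of_injective _ hinj, hSi, hSx, jg_card_star, jg_card_star]
  have heq := Finset.eq_of_subset_of_card_le hsub hcard
  intro t ht
  have htSx : t ∈ Sx := by
    simp only [hSx, Finset.mem_filter, Finset.mem_univ, true_and]; exact ht
  rw [← heq] at htSx
  obtain ⟨s, hs, rfl⟩ := Finset.mem_image.mp htSx
  simp only [hSi, Finset.mem_filter, Finset.mem_univ, true_and] at hs
  rwa [τ.symm_apply_apply s]

lemma jg_exists_starPt (h3 : 3 ≤ Fintype.card ι) (h4 : Fintype.card ι ≠ 4)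
    (τ : johnsonGraph ι ≃g johnsonGraph ι) (i : ι) : ∃ x, jgStarPt τ i x := by
  classical
  rcases (by omega : Fintype.card ι = 3 ∨ 5 ≤ Fintype.card ι) with hc | hc
  · -- card 3 case
    have hcard : (Finset.univ.erase i).card = 2 := by
      rw [Finset.card_erase_of_mem (Finset.mem_univ i), Finset.card_univ, hc]
    obtain ⟨a, b, hab, he⟩ := Finset.card_eq_two.mp hcard
    have hai : a ≠ i := (Finset.mem_erase.mp (he ▸ (by simp : a ∈ ({a,b} : Finset ι)) :
      a ∈ Finset.univ.erase i)).1
    have hbi : b ≠ i := (Finset.mem_erase.mp (he ▸ (by simp : b ∈ ({a,b} : Finset ι)) :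
      b ∈ Finset.univ.erase i)).1
    have hne : jgPair i a hai ≠ jgPair i b hbi := fun h => hab (jgPair_inj h)
    obtain ⟨x, hx⟩ := jg_image_inter τ hne ⟨i, by simp [jgPair]⟩
    rw [Finset.mem_inter] at hx
    refine ⟨x, fun s hs => ?_⟩
    obtain ⟨c, hci, rfl⟩ := jg_vertex_eq hs
    have : c ∈ Finset.univ.erase i := Finset.mem_erase.mpr ⟨hci, Finset.mem_univ c⟩
    rw [he] at this
    simp only [Finset.mem_insert, Finset.mem_singleton] at this
    rcases this with rfl | rfl
    · exact hx.1
    · exact hx.2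
  · -- card ≥ 5 case: pick 4 distinct elements ≠ i
    have hc0 : 4 ≤ (Finset.univ.erase i).card := by
      rw [Finset.card_erase_of_mem (Finset.mem_univ i), Finset.card_univ]; omega
    obtain ⟨a, ha⟩ := Finset.card_pos.mp (by omega : 0 < (Finset.univ.erase i).card)
    have hc1 : 3 ≤ ((Finset.univ.erase i).erase a).card := by
      rw [Finset.card_erase_of_mem ha]; omega
    obtain ⟨b, hb⟩ := Finset.card_pos.mp (by omega : 0 < ((Finset.univ.erase i).erase a).card)
    have hc2 : 2 ≤ (((Finset.univ.erase i).erase a).erase b).card := by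
      rw [Finset.card_erase_of_mem hb]; omega
    obtain ⟨c, hcm⟩ := Finset.card_pos.mp
      (by omega : 0 < (((Finset.univ.erase i).erase a).erase b).card)
    have hc3 : 1 ≤ ((((Finset.univ.erase i).erase a).erase b).erase c).card := by
      rw [Finset.card_erase_of_mem hcm]; omega
    obtain ⟨d, hdm⟩ := Finset.card_pos.mp
      (by omega : 0 < ((((Finset.univ.erase i).erase a).erase b).erase c).card)
    -- extract distinctness facts
    have hai : a ≠ i := (Finset.mem_erase.mp ha).1
    obtain ⟨hba, hb'⟩ := Finset.mem_erase.mp hb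
    have hbi : b ≠ i := (Finset.mem_erase.mp hb').1
    obtain ⟨hcb, hc'⟩ := Finset.mem_erase.mp hcm
    obtain ⟨hca, hc''⟩ := Finset.mem_erase.mp hc'
    have hci : c ≠ i := (Finset.mem_erase.mp hc'').1
    obtain ⟨hdc, hd'⟩ := Finset.mem_erase.mp hdm
    obtain ⟨hdb, hd''⟩ := Finset.mem_erase.mp hd'
    obtain ⟨hda, hd'''⟩ := Finset.mem_erase.mp hd''
    have hdi : d ≠ i := (Finset.mem_erase.mp hd''').1
    set pa := jgPair i a hai
    set pb := jgPair i b hbi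
    set pc := jgPair i c hci
    set pd := jgPair i d hdi
    have hpab : pa ≠ pb := fun h => hba (jgPair_inj h).symm
    have hpac : pa ≠ pc := fun h => hca (jgPair_inj h).symm
    have hpad : pa ≠ pd := fun h => hda (jgPair_inj h).symm
    have hpbc : pb ≠ pc := fun h => hcb (jgPair_inj h).symm
    have hpbd : pb ≠ pd := fun h => hdb (jgPair_inj h).symm
    have hpcd : pc ≠ pd := fun h => hdc (jgPair_inj h).symm
    have hii : ∀ (u v : {s : Finset ι // s.card = 2}), i ∈ u.val → i ∈ v.val → u ≠ v →
        ((τ u).val ∩ (τ v).val).Nonempty := fun u v hu hv huv =>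
      jg_image_inter τ huv ⟨i, Finset.mem_inter.mpr ⟨hu, hv⟩⟩
    have hipa := jgPair_fst i a hai
    have hipb := jgPair_fst i b hbi
    have hipc := jgPair_fst i c hci
    have hipd := jgPair_fst i d hdi
    obtain ⟨x, hxa, hxb, hxc, hxd⟩ := jg_four (τ pa).prop (τ pb).prop (τ pc).prop (τ pd).prop
      (jg_image_val_ne τ hpab) (jg_image_val_ne τ hpac) (jg_image_val_ne τ hpad)
      (jg_image_val_ne τ hpbc) (jg_image_val_ne τ hpbd) (jg_image_val_ne τ hpcd)
      (hii _ _ hipa hipb hpab) (hii _ _ hipa hipc hpac) (hii _ _ hipa hipd hpad)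
      (hii _ _ hipb hipc hpbc) (hii _ _ hipb hipd hpbd) (hii _ _ hipc hipd hpcd)
    refine ⟨x, fun s hs => ?_⟩
    rcases eq_or_ne s pa with rfl | hsa
    · exact hxa
    rcases eq_or_ne s pb with rfl | hsb
    · exact hxb
    rcases eq_or_ne s pc with rfl | hsc
    · exact hxc
    rcases eq_or_ne s pd with rfl | hsd
    · exact hxd
    obtain ⟨y, hya, hyb, _, hys⟩ := jg_four (τ pa).prop (τ pb).prop (τ pc).prop (τ s).prop
      (jg_image_val_ne τ hpab) (jg_image_val_ne τ hpac) (jg_image_val_ne τ (Ne.symm hsa))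
      (jg_image_val_ne τ hpbc) (jg_image_val_ne τ (Ne.symm hsb))
      (jg_image_val_ne τ (Ne.symm hsc))
      (hii _ _ hipa hipb hpab) (hii _ _ hipa hipc hpac) (hii _ _ hipa hs (Ne.symm hsa))
      (hii _ _ hipb hipc hpbc) (hii _ _ hipb hs (Ne.symm hsb)) (hii _ _ hipc hs (Ne.symm hsc))
    have hxy : x = y := jg_inter_unique (τ pa).prop (τ pb).prop (jg_image_val_ne τ hpab)
      hxa hxb hya hyb
    rw [hxy]
    exact hys

end JGAux

theorem stmt_10 {ι : Type*} [DecidableEq ι] [Fintype ι]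
    (h3 : 3 ≤ Fintype.card ι) (h4 : Fintype.card ι ≠ 4)
    (τ : johnsonGraph ι ≃g johnsonGraph ι) :
    ∃ π : Equiv.Perm ι, ∀ s : {s : Finset ι // s.card = 2},
      (τ s).val = s.val.image π := by
  classical
  choose f hf using jg_exists_starPt h3 h4 τ
  choose g hg using jg_exists_starPt h3 h4 τ.symm
  have hgf : ∀ i, g (f i) = i := fun i =>
    jg_starPt_unique h3 τ.symm (hg (f i)) (jg_starPt_inv τ (hf i))
  have hfg : ∀ x, f (g x) = x := fun x =>
    jg_starPt_unique h3 τ (hf (g x)) (jg_starPt_inv τ.symm (hg x))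
  refine ⟨⟨f, g, hgf, hfg⟩, fun s => ?_⟩
  obtain ⟨i, j, hij, hs⟩ := Finset.card_eq_two.mp s.prop
  have hfi : f i ∈ (τ s).val := hf i s (by rw [hs]; simp)
  have hfj : f j ∈ (τ s).val := hf j s (by rw [hs]; simp)
  have hfij : f i ≠ f j := fun h => hij (by rw [← hgf i, ← hgf j, h])
  rw [jg_eq_pair (τ s).prop hfi hfj hfij, hs]
  simp
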